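/- Let (X, μ) be a probability space, G a countable group acting measurably on X such that μ is quasi-invariant (for each g ∈ G, the pushforward of μ under x ↦ g·x is equivalent to μ), and H a real separable Hilbert space. Let Ψ : G × X → (linear isometric equivalences of H) and ρ : G × X → H be measurable maps satisfying, for all g, h ∈ G and μ-almost every x ∈ X, the cocycle relations Ψ(gh,x) = Ψ(g,h·x) ∘ Ψ(h,x) and ρ(gh,x) = ρ(g,h·x) + Ψ(g,h·x)(ρ(h,x)). Suppose the induced affine isometric action on essentially bounded functions has a bounded orbit: there exist a measurable essentially bounded φ₀ : X → H and a constant C ≥ 0 such that for every g ∈ G, ‖Ψ(g,x)(φ₀(x)) + ρ(g,x)‖ ≤ C for μ-almost every x. Then there is a fixed point: there exists a measurable essentially bounded φ : X → H such that for every g ∈ G, φ(g·x) = Ψ(g,x)(φ(x)) + ρ(g,x) for μ-almost every x ∈ X. -/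

import Mathlib

open MeasureTheory

section Cheby

variable {H : Type*} [NormedAddCommGroup H] [InnerProductSpace ℝ H]

/-- The "sup of distances" functional for a sequence `s`. -/
noncomputable def chebyF (s : ℕ → H) (v : H) : ℝ := ⨆ n, ‖v - s n‖

lemma chebyF_bddAbove {s : ℕ → H} {D : ℝ} (hs : ∀ n, ‖s n‖ ≤ D) (v : H) :
    BddAbove (Set.range fun n => ‖v - s n‖) := by
  refine ⟨‖v‖ + D, ?_⟩
  rintro _ ⟨n, rfl⟩
  exact (norm_sub_le _ _).trans (by linarith [hs n])

lemma norm_le_chebyF {s : ℕ → H} {D : ℝ} (hs : ∀ n, ‖s n‖ ≤ D) (n : ℕ) (v : H) :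
    ‖v - s n‖ ≤ chebyF s v :=
  le_ciSup (chebyF_bddAbove hs v) n

lemma chebyF_nonneg {s : ℕ → H} {D : ℝ} (hs : ∀ n, ‖s n‖ ≤ D) (v : H) :
    0 ≤ chebyF s v :=
  (norm_nonneg _).trans (norm_le_chebyF hs 0 v)

lemma chebyF_le {s : ℕ → H} {B : ℝ} {v : H} (h : ∀ n, ‖v - s n‖ ≤ B) :
    chebyF s v ≤ B :=
  ciSup_le h

lemma chebyF_le_add {s : ℕ → H} {D : ℝ} (hs : ∀ n, ‖s n‖ ≤ D) (u v : H) :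
    chebyF s u ≤ chebyF s v + ‖u - v‖ := by
  refine chebyF_le fun n => ?_
  calc ‖u - s n‖ = ‖(v - s n) + (u - v)‖ := by abel_nf
    _ ≤ ‖v - s n‖ + ‖u - v‖ := norm_add_le _ _
    _ ≤ chebyF s v + ‖u - v‖ := by linarith [norm_le_chebyF hs n v]

lemma chebyF_key {s : ℕ → H} {D : ℝ} (hs : ∀ n, ‖s n‖ ≤ D) {r : ℝ} (hr0 : 0 ≤ r)
    (hrle : ∀ v, r ≤ chebyF s v) (u v : H) :
    ‖u - v‖ ^ 2 / 2 + 2 * r ^ 2 ≤ chebyF s u ^ 2 + chebyF s v ^ 2 := by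
  set m : H := (2:ℝ)⁻¹ • (u + v) with hm
  set B : ℝ := (2 * chebyF s u ^ 2 + 2 * chebyF s v ^ 2 - ‖u - v‖ ^ 2) / 4 with hB
  have hpar : ∀ n, 4 * ‖m - s n‖ ^ 2 + ‖u - v‖ ^ 2
      = 2 * ‖u - s n‖ ^ 2 + 2 * ‖v - s n‖ ^ 2 := by
    intro n
    have h := parallelogram_law_with_norm ℝ (u - s n) (v - s n)
    have h1 : u - s n + (v - s n) = (2:ℝ) • (m - s n) := by
      rw [hm]; module
    have h2 : u - s n - (v - s n) = u - v := by abel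
    rw [h1, h2, norm_smul] at h
    simp only [Real.norm_ofNat] at h
    nlinarith [h]
  have hBn : ∀ n, ‖m - s n‖ ^ 2 ≤ B := by
    intro n
    have h1 := norm_le_chebyF hs n u
    have h2 := norm_le_chebyF hs n v
    have h3 := norm_nonneg (u - s n)
    have h4 := norm_nonneg (v - s n)
    nlinarith [hpar n]
  have hB0 : 0 ≤ B := le_trans (sq_nonneg _) (hBn 0)
  have hfm : chebyF s m ≤ Real.sqrt B := by
    refine chebyF_le fun n => ?_
    have := Real.sqrt_le_sqrt (hBn n)
    rwa [Real.sqrt_sq (norm_nonneg _)] at this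
  have hrB : r ^ 2 ≤ B := by
    have h1 : r ≤ Real.sqrt B := le_trans (hrle m) hfm
    have := pow_le_pow_left₀ hr0 h1 2
    rwa [Real.sq_sqrt hB0] at this
  rw [hB] at hrB
  linarith

lemma chebyF_unique {s : ℕ → H} {D : ℝ} (hs : ∀ n, ‖s n‖ ≤ D) {c c' : H}
    (hc : ∀ v, chebyF s c ≤ chebyF s v) (hc' : ∀ v, chebyF s c' ≤ chebyF s v) :
    c = c' := by
  have h1 : chebyF s c = chebyF s c' := le_antisymm (hc c') (hc' c)
  have key := chebyF_key hs (chebyF_nonneg hs c) hc c c'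
  rw [← h1] at key
  have : ‖c - c'‖ ^ 2 ≤ 0 := by linarith
  have : ‖c - c'‖ = 0 := by nlinarith [norm_nonneg (c - c')]
  rwa [norm_sub_eq_zero_iff] at this

lemma chebyF_transport {s t : ℕ → H} {D : ℝ} (hs : ∀ n, ‖s n‖ ≤ D)
    (Ψ₀ : H ≃ₗᵢ[ℝ] H) (w₀ : H)
    (hst : ∀ n, ∃ m, t n = Ψ₀ (s m) + w₀) (hts : ∀ m, ∃ n, t n = Ψ₀ (s m) + w₀)
    {c : H} (hmin : ∀ v, chebyF s c ≤ chebyF s v) :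
    ∀ v, chebyF t (Ψ₀ c + w₀) ≤ chebyF t v := by
  have ht_bdd : ∀ n, ‖t n‖ ≤ D + ‖w₀‖ := by
    intro n
    obtain ⟨m, hm⟩ := hst n
    rw [hm]
    calc ‖Ψ₀ (s m) + w₀‖ ≤ ‖Ψ₀ (s m)‖ + ‖w₀‖ := norm_add_le _ _
      _ = ‖s m‖ + ‖w₀‖ := by rw [Ψ₀.norm_map]
      _ ≤ D + ‖w₀‖ := by linarith [hs m]
  have heq : ∀ u : H, chebyF t (Ψ₀ u + w₀) = chebyF s u := by
    intro u
    apply le_antisymm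
    · refine chebyF_le fun n => ?_
      obtain ⟨m, hm⟩ := hst n
      rw [hm]
      have : Ψ₀ u + w₀ - (Ψ₀ (s m) + w₀) = Ψ₀ (u - s m) := by
        rw [map_sub]; abel
      rw [this, Ψ₀.norm_map]
      exact norm_le_chebyF hs m u
    · refine chebyF_le fun m => ?_
      obtain ⟨n, hn⟩ := hts m
      have : u - s m = Ψ₀.symm (Ψ₀ u + w₀ - t n) := by
        rw [hn]
        simp [map_sub]
      rw [this, Ψ₀.symm.norm_map]
      exact norm_le_chebyF ht_bdd n (Ψ₀ u + w₀)
  intro v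
  have hv : v = Ψ₀ (Ψ₀.symm (v - w₀)) + w₀ := by simp
  rw [heq c, hv, heq (Ψ₀.symm (v - w₀))]
  exact hmin _

lemma chebyF_cauchy {s : ℕ → H} {D : ℝ} (hs : ∀ n, ‖s n‖ ≤ D) {r : ℝ} (hr0 : 0 ≤ r)
    (hrle : ∀ v, r ≤ chebyF s v) {w : ℕ → H}
    (hw : ∀ k, chebyF s (w k) ≤ r + 1 / (k + 1)) : CauchySeq w := by
  rw [Metric.cauchySeq_iff]
  intro ε hε
  obtain ⟨N, hN⟩ : ∃ N : ℕ, (8 * r + 4) * (1 / (N + 1)) < ε ^ 2 := by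
    have h8 : 0 < 8 * r + 4 := by linarith
    have := tendsto_one_div_add_atTop_nhds_zero_nat (𝕜 := ℝ)
    have h2 : (0:ℝ) < ε ^ 2 / (8 * r + 4) := by positivity
    obtain ⟨N, hN⟩ := (Metric.tendsto_atTop.1 this) _ h2
    refine ⟨N, ?_⟩
    have := hN N le_rfl
    rw [Real.dist_eq, sub_zero] at this
    have h3 : (1:ℝ) / (N + 1) < ε ^ 2 / (8 * r + 4) := by
      have h4 : (0:ℝ) < 1 / (N + 1) := by positivity
      rwa [abs_of_pos h4] at this
    calc (8 * r + 4) * (1 / (N + 1)) < (8 * r + 4) * (ε ^ 2 / (8 * r + 4)) := by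
          exact mul_lt_mul_of_pos_left h3 h8
      _ = ε ^ 2 := by field_simp
  refine ⟨N, fun j hj k hk => ?_⟩
  have key := chebyF_key hs hr0 hrle (w j) (w k)
  have hεN1 : (1:ℝ) / (N + 1) ≤ 1 := by
    rw [div_le_one (by positivity)]; linarith [Nat.cast_nonneg (α := ℝ) N]
  have hmono : ∀ i : ℕ, N ≤ i → (1:ℝ) / (i + 1) ≤ 1 / (N + 1) := by
    intro i hi
    apply one_div_le_one_div_of_le (by positivity)
    have : (N:ℝ) ≤ i := Nat.cast_le.2 hi
    linarith
  have hj1 := hmono j hj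
  have hk1 := hmono k hk
  have hwj := hw j
  have hwk := hw k
  have hwj0 : r ≤ chebyF s (w j) := hrle _
  have hwk0 : r ≤ chebyF s (w k) := hrle _
  have hεj0 : (0:ℝ) < 1 / (j + 1) := by positivity
  have hεk0 : (0:ℝ) < 1 / (k + 1) := by positivity
  have hsq : ‖w j - w k‖ ^ 2 < ε ^ 2 := by
    nlinarith [hN]
  rw [dist_eq_norm]
  exact lt_of_pow_lt_pow_left₀ 2 hε.le hsq

end Cheby

section MeasApply

variable {X : Type*} [MeasurableSpace X]
variable {H : Type*} [NormedAddCommGroup H] [NormedSpace ℝ H]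
  [TopologicalSpace.SeparableSpace H] [MeasurableSpace H] [BorelSpace H]

lemma measurable_isometry_apply (Ψ₀ : X → (H ≃ₗᵢ[ℝ] H))
    (hΨ : ∀ v, Measurable fun x => Ψ₀ x v) {f : X → H} (hf : Measurable f) :
    Measurable fun x => Ψ₀ x (f x) := by
  classical
  have hH : Nonempty H := ⟨0⟩
  set d : ℕ → H := TopologicalSpace.denseSeq H with hd
  have hdd : DenseRange d := TopologicalSpace.denseRange_denseSeq H
  have hex : ∀ (k : ℕ) (x : X), ∃ m, dist (f x) (d m) < 1 / (k + 1) := by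
    intro k x
    exact hdd.exists_dist_lt (f x) (by positivity)
  have happrox_meas : ∀ k : ℕ, Measurable fun x => Ψ₀ x (d (Nat.find (hex k x))) := by
    intro k
    exact Measurable.find (f := fun n x => Ψ₀ x (d n))
      (p := fun n x => dist (f x) (d n) < 1 / (k + 1))
      (fun n => hΨ (d n))
      (fun n => measurableSet_lt ((continuous_id.dist continuous_const).measurable.comp hf) measurable_const)
      (fun x => hex _ x)
  apply measurable_of_tendsto_metrizable' Filter.atTop happrox_meas
  rw [tendsto_pi_nhds]
  intro x
  rw [tendsto_iff_dist_tendsto_zero]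
  have hb : ∀ k : ℕ, dist (Ψ₀ x (d (Nat.find (hex k x)))) (Ψ₀ x (f x)) ≤ 1 / (k + 1) := by
    intro k
    rw [(Ψ₀ x).isometry.dist_eq]
    have := Nat.find_spec (hex k x)
    rw [dist_comm] at this
    exact this.le
  refine squeeze_zero (fun k => dist_nonneg) hb tendsto_one_div_add_atTop_nhds_zero_nat

end MeasApply

open Filter Topology

/-- **Theorem D**: an affine isometric action on essentially bounded measurable `H`-valued
functions, induced by measurable cocycles over a quasi-invariant action of a countable group,
with a bounded orbit, has a fixed point. -/
theorem bounded_orbit_on_Linfty_has_fixed_point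
    {X : Type*} [MeasurableSpace X] (μ : Measure X) [IsProbabilityMeasure μ]
    {G : Type*} [Group G] [Countable G]
    {H : Type*} [NormedAddCommGroup H] [InnerProductSpace ℝ H] [CompleteSpace H]
    [TopologicalSpace.SeparableSpace H] [MeasurableSpace H] [BorelSpace H]
    (act : G → X → X)
    (hact_one : ∀ x, act 1 x = x)
    (hact_mul : ∀ g h x, act (g * h) x = act g (act h x))
    (hact_meas : ∀ g, Measurable (act g))
    (hquasi : ∀ g, μ.map (act g) ≪ μ ∧ μ ≪ μ.map (act g))
    (Ψ : G → X → (H ≃ₗᵢ[ℝ] H)) (ρ : G → X → H)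
    (hΨ_meas : ∀ g v, Measurable fun x => Ψ g x v)
    (hρ_meas : ∀ g, Measurable fun x => ρ g x)
    (hρ_bdd : ∀ g, ∃ Cg : ℝ, ∀ᵐ x ∂μ, ‖ρ g x‖ ≤ Cg)
    (hΨ_coc : ∀ g h, ∀ᵐ x ∂μ, ∀ v, Ψ (g * h) x v = Ψ g (act h x) (Ψ h x v))
    (hρ_coc : ∀ g h, ∀ᵐ x ∂μ, ρ (g * h) x = ρ g (act h x) + Ψ g (act h x) (ρ h x))
    (φ₀ : X → H) (hφ₀_meas : Measurable φ₀)
    (hφ₀_bdd : ∃ C₀ : ℝ, ∀ᵐ x ∂μ, ‖φ₀ x‖ ≤ C₀)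
    (C : ℝ) (hC : 0 ≤ C)
    (hbounded : ∀ g, ∀ᵐ x ∂μ, ‖Ψ g x (φ₀ x) + ρ g x‖ ≤ C) :
    ∃ φ : X → H, Measurable φ ∧ (∃ C' : ℝ, ∀ᵐ x ∂μ, ‖φ x‖ ≤ C') ∧
      ∀ g, ∀ᵐ x ∂μ, φ (act g x) = Ψ g x (φ x) + ρ g x := by
  classical
  obtain ⟨e, he⟩ := exists_surjective_nat G
  have hH : Nonempty H := ⟨0⟩
  set d : ℕ → H := TopologicalSpace.denseSeq H with hd
  have hdd : DenseRange d := TopologicalSpace.denseRange_denseSeq H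
  have hqmp : ∀ g : G, Measure.QuasiMeasurePreserving (act g) μ μ :=
    fun g => ⟨hact_meas g, (hquasi g).1⟩
  have hinv : ∀ (g : G) (x : X), act g (act g⁻¹ x) = x := fun g x => by
    rw [← hact_mul, mul_inv_cancel, hact_one]
  have hinv' : ∀ (g : G) (x : X), act g⁻¹ (act g x) = x := fun g x => by
    rw [← hact_mul, inv_mul_cancel, hact_one]
  set b : G → X → H := fun g x => Ψ g x (φ₀ x) + ρ g x with hbdef
  have hb_meas : ∀ g, Measurable (b g) := fun g =>
    (measurable_isometry_apply (Ψ g) (hΨ_meas g) hφ₀_meas).add (hρ_meas g)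
  set F : ℕ → X → H := fun n x => b (e n) (act (e n)⁻¹ x) with hFdef
  have hF_meas : ∀ n, Measurable (F n) := fun n => (hb_meas _).comp (hact_meas _)
  -- the good set S
  set S : Set X := {x | (∀ n, ‖F n x‖ ≤ C) ∧
      ∀ h g : G, b (h * g) (act g⁻¹ x) = Ψ h x (b g (act g⁻¹ x)) + ρ h x} with hSdef
  have hS_meas : MeasurableSet S := by
    have hrw : S = (⋂ n, {x | ‖F n x‖ ≤ C}) ∩
        ⋂ (h : G), ⋂ (g : G),
          {x | b (h * g) (act g⁻¹ x) = Ψ h x (b g (act g⁻¹ x)) + ρ h x} := by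
      ext x
      simp only [hSdef, Set.mem_setOf_eq, Set.mem_inter_iff, Set.mem_iInter]
    rw [hrw]
    refine MeasurableSet.inter ?_ ?_
    · exact MeasurableSet.iInter fun n =>
        measurableSet_le (hF_meas n).norm measurable_const
    · refine MeasurableSet.iInter fun h => MeasurableSet.iInter fun g => ?_
      have h1 : Measurable fun x => b (h * g) (act g⁻¹ x) := (hb_meas _).comp (hact_meas _)
      have h2 : Measurable fun x => Ψ h x (b g (act g⁻¹ x)) + ρ h x :=
        (measurable_isometry_apply (Ψ h) (hΨ_meas h)
          ((hb_meas g).comp (hact_meas g⁻¹))).add (hρ_meas h)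
      have hrw2 : {x | b (h * g) (act g⁻¹ x) = Ψ h x (b g (act g⁻¹ x)) + ρ h x}
          = (fun x => b (h * g) (act g⁻¹ x) - (Ψ h x (b g (act g⁻¹ x)) + ρ h x)) ⁻¹' {0} := by
        ext x
        simp [sub_eq_zero]
      rw [hrw2]
      exact (h1.sub h2) (isClosed_singleton.measurableSet)
  -- a.e. membership in S
  have hA : ∀ᵐ x ∂μ, ∀ n, ‖F n x‖ ≤ C := by
    rw [ae_all_iff]
    intro n
    have := (hqmp (e n)⁻¹).ae (hbounded (e n))
    filter_upwards [this] with x hx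
    exact hx
  have hBae : ∀ᵐ x ∂μ, ∀ h g : G,
      b (h * g) (act g⁻¹ x) = Ψ h x (b g (act g⁻¹ x)) + ρ h x := by
    rw [ae_all_iff]
    intro h
    rw [ae_all_iff]
    intro g
    have hcoc : ∀ᵐ y ∂μ, b (h * g) y = Ψ h (act g y) (b g y) + ρ h (act g y) := by
      filter_upwards [hΨ_coc h g, hρ_coc h g] with y h1 h2
      show Ψ (h * g) y (φ₀ y) + ρ (h * g) y
          = Ψ h (act g y) (Ψ g y (φ₀ y) + ρ g y) + ρ h (act g y)
      rw [map_add, h1 (φ₀ y), h2]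
      abel
    have := (hqmp g⁻¹).ae hcoc
    filter_upwards [this] with x hx
    rw [hinv g x] at hx
    exact hx
  have hS_ae : ∀ᵐ x ∂μ, x ∈ S := by
    filter_upwards [hA, hBae] with x h1 h2
    exact ⟨h1, h2⟩
  -- the truncated sequence
  set D : ℝ := max C 0 with hDdef
  set F' : ℕ → X → H := fun n x => if x ∈ S then F n x else 0 with hF'def
  have hF'_meas : ∀ n, Measurable (F' n) := fun n =>
    Measurable.ite hS_meas (hF_meas n) measurable_const
  have hF'_bdd : ∀ x (n : ℕ), ‖F' n x‖ ≤ D := by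
    intro x n
    by_cases hx : x ∈ S
    · simp only [hF'def, if_pos hx]
      exact (hx.1 n).trans (le_max_left _ _)
    · simp only [hF'def, if_neg hx, norm_zero]
      exact le_max_right _ _
  set f : X → H → ℝ := fun x v => chebyF (fun n => F' n x) v with hfdef
  have hf_meas : ∀ v, Measurable fun x => f x v := by
    intro v
    show Measurable fun x => ⨆ n, ‖v - F' n x‖
    exact Measurable.iSup fun n => (measurable_const.sub (hF'_meas n)).norm
  set r : X → ℝ := fun x => ⨅ m, f x (d m) with hrdef
  have hr_meas : Measurable r := Measurable.iInf fun m => hf_meas (d m)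
  have hr_nonneg : ∀ x, 0 ≤ r x := fun x =>
    le_ciInf fun m => chebyF_nonneg (hF'_bdd x) _
  have hr_le : ∀ x v, r x ≤ f x v := by
    intro x v
    by_contra hlt
    push_neg at hlt
    obtain ⟨m, hm⟩ := hdd.exists_dist_lt v (sub_pos.2 hlt)
    have h1 : f x (d m) ≤ f x v + ‖d m - v‖ := chebyF_le_add (hF'_bdd x) _ _
    have h2 : r x ≤ f x (d m) :=
      ciInf_le ⟨0, by rintro _ ⟨i, rfl⟩; exact chebyF_nonneg (hF'_bdd x) _⟩ m
    have h3 : ‖d m - v‖ = dist v (d m) := by rw [dist_comm, dist_eq_norm]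
    rw [h3] at h1
    linarith
  have hsel : ∀ (k : ℕ) (x : X), ∃ m, f x (d m) < r x + 1 / (k + 1) := by
    intro k x
    apply exists_lt_of_ciInf_lt
    exact lt_add_of_pos_right _ (by positivity)
  set w : ℕ → X → H := fun k x => d (Nat.find (hsel k x)) with hwdef
  have hw_meas : ∀ k, Measurable (w k) := by
    intro k
    exact Measurable.find (f := fun n (_ : X) => d n)
      (p := fun n x => f x (d n) < r x + 1 / (k + 1))
      (fun n => measurable_const)
      (fun n => measurableSet_lt (hf_meas (d n)) (hr_meas.add measurable_const))
      (hsel k)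
  have hw_spec : ∀ (k : ℕ) (x : X), f x (w k x) < r x + 1 / (k + 1) := fun k x =>
    Nat.find_spec (hsel k x)
  have hcauchy : ∀ x, CauchySeq fun k => w k x := fun x =>
    chebyF_cauchy (hF'_bdd x) (hr_nonneg x) (hr_le x) fun k => (hw_spec k x).le
  have hlim : ∀ x, ∃ c, Tendsto (fun k => w k x) atTop (𝓝 c) := fun x =>
    cauchySeq_tendsto_of_complete (hcauchy x)
  set φ : X → H := fun x => (hlim x).choose with hφdef
  have hφ_tendsto : ∀ x, Tendsto (fun k => w k x) atTop (𝓝 (φ x)) := fun x =>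
    (hlim x).choose_spec
  have hφ_meas : Measurable φ :=
    measurable_of_tendsto_metrizable' atTop hw_meas (tendsto_pi_nhds.2 hφ_tendsto)
  -- minimality of φ x
  have hnorm_tendsto : ∀ x, Tendsto (fun k => ‖φ x - w k x‖) atTop (𝓝 0) := by
    intro x
    have h0 := tendsto_iff_dist_tendsto_zero.1 (hφ_tendsto x)
    convert h0 using 2 with k
    rw [dist_eq_norm, norm_sub_rev]
  have hφ_min : ∀ x v, f x (φ x) ≤ f x v := by
    intro x v
    refine le_trans ?_ (hr_le x v)
    have hle : ∀ k : ℕ, f x (φ x) ≤ r x + 1 / (k + 1) + ‖φ x - w k x‖ := fun k =>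
      (chebyF_le_add (hF'_bdd x) (φ x) (w k x)).trans (by linarith [hw_spec k x])
    have htv : Tendsto (fun k : ℕ => r x + 1 / (k + 1) + ‖φ x - w k x‖) atTop
        (𝓝 (r x + 0 + 0)) :=
      (Tendsto.add tendsto_const_nhds tendsto_one_div_add_atTop_nhds_zero_nat).add
        (hnorm_tendsto x)
    have := ge_of_tendsto htv (Eventually.of_forall hle)
    simpa using this
  -- boundedness
  have hφ_bdd : ∀ x, ‖φ x‖ ≤ 2 * D + 1 := by
    intro x
    have hwb : ∀ k : ℕ, ‖w k x‖ ≤ 2 * D + 1 := by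
      intro k
      have h1 : ‖w k x - F' 0 x‖ ≤ f x (w k x) := norm_le_chebyF (hF'_bdd x) 0 _
      have hk1 : (1 : ℝ) / (k + 1) ≤ 1 := by
        rw [div_le_one (by positivity)]
        linarith [Nat.cast_nonneg (α := ℝ) k]
      have h2 : f x (w k x) ≤ r x + 1 := by linarith [hw_spec k x]
      have h3 : r x ≤ f x 0 := hr_le x 0
      have h4 : f x 0 ≤ D := chebyF_le fun n => by simpa using hF'_bdd x n
      have h5 : ‖F' 0 x‖ ≤ D := hF'_bdd x 0
      have h6 : ‖w k x‖ ≤ ‖w k x - F' 0 x‖ + ‖F' 0 x‖ := by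
        have := norm_add_le (w k x - F' 0 x) (F' 0 x)
        simpa using this
      linarith
    exact le_of_tendsto ((continuous_norm.tendsto _).comp (hφ_tendsto x))
      (Eventually.of_forall hwb)
  refine ⟨φ, hφ_meas, ⟨2 * D + 1, Eventually.of_forall hφ_bdd⟩, ?_⟩
  -- equivariance
  intro h
  filter_upwards [hS_ae, (hqmp h).ae hS_ae] with x hx hhx
  obtain ⟨hxA, hxB⟩ := hx
  have hxS : x ∈ S := ⟨hxA, hxB⟩
  have hFx : ∀ n, F' n x = F n x := fun n => if_pos hxS
  have hFhx : ∀ n, F' n (act h x) = F n (act h x) := fun n => if_pos hhx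
  have hact_calc : ∀ g : G, act (h * g)⁻¹ (act h x) = act g⁻¹ x := by
    intro g
    rw [mul_inv_rev, hact_mul, hinv']
  have hst : ∀ n, ∃ m, F' n (act h x) = Ψ h x (F' m x) + ρ h x := by
    intro n
    obtain ⟨m, hm⟩ := he (h⁻¹ * e n)
    refine ⟨m, ?_⟩
    have key := hxB h (h⁻¹ * e n)
    have e1 : h * (h⁻¹ * e n) = e n := by group
    rw [e1] at key
    have e2 := hact_calc (h⁻¹ * e n)
    rw [e1] at e2
    rw [hFhx n, hFx m]
    show b (e n) (act (e n)⁻¹ (act h x)) = Ψ h x (b (e m) (act (e m)⁻¹ x)) + ρ h x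
    rw [hm, e2]
    exact key
  have hts : ∀ m, ∃ n, F' n (act h x) = Ψ h x (F' m x) + ρ h x := by
    intro m
    obtain ⟨n, hn⟩ := he (h * e m)
    refine ⟨n, ?_⟩
    rw [hFhx n, hFx m]
    show b (e n) (act (e n)⁻¹ (act h x)) = Ψ h x (b (e m) (act (e m)⁻¹ x)) + ρ h x
    rw [hn, hact_calc (e m)]
    exact hxB h (e m)
  have hmin1 : ∀ v, f (act h x) (Ψ h x (φ x) + ρ h x) ≤ f (act h x) v :=
    chebyF_transport (hF'_bdd x) (Ψ h x) (ρ h x) hst hts (hφ_min x)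
  exact chebyF_unique (hF'_bdd (act h x)) (hφ_min (act h x)) hmin1
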